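/- Let k ≥ 1 be an integer and let G be a strongly edge-colored graph whose average degree satisfies d(G) ≥ 2k − 1. Then G contains a rainbow matching of size at least k. -/

import Mathlib

/-- The color degree of a vertex `v`: the number of distinct colors appearing
on edges of `G` incident to `v`. -/
noncomputable def colorDegree {V : Type*} (G : SimpleGraph V) (c : Sym2 V → ℕ) (v : V) : ℕ :=
  (c '' {e : Sym2 V | e ∈ G.edgeSet ∧ v ∈ e}).ncard

/-- `M` is a rainbow matching in the edge-colored graph `(G, c)`:
a set of edges of `G`, pairwise vertex-disjoint, with pairwise distinct colors. -/
def IsRainbowMatching {V : Type*} (G : SimpleGraph V) (c : Sym2 V → ℕ)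
    (M : Finset (Sym2 V)) : Prop :=
  ↑M ⊆ G.edgeSet ∧
  (∀ e ∈ M, ∀ f ∈ M, e ≠ f → ∀ v : V, v ∈ e → v ∉ f) ∧
  Set.InjOn c ↑M

/-- `(G, c)` is strongly edge-colored: for each color, the edges of that color form an
induced matching, i.e. any two distinct edges of the same color neither share a vertex
nor are joined by an edge of `G`. -/
def StronglyEdgeColored {V : Type*} (G : SimpleGraph V) (c : Sym2 V → ℕ) : Prop :=
  ∀ e ∈ G.edgeSet, ∀ f ∈ G.edgeSet, e ≠ f → c e = c f →
    ∀ u v : V, u ∈ e → v ∈ f → u ≠ v ∧ ¬ G.Adj u v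

section Aux

open Finset SimpleGraph

variable {V : Type*} [Fintype V] [DecidableEq V] {G : SimpleGraph V} [DecidableRel G.Adj]
  {c : Sym2 V → ℕ}

/-- The endpoints of an unordered pair, as a `Finset`. -/
private def everts (e : Sym2 V) : Finset V := Finset.univ.filter (· ∈ e)

private lemma mem_everts {v : V} {e : Sym2 V} : v ∈ everts e ↔ v ∈ e := by
  simp [everts]

private lemma everts_card_le (e : Sym2 V) : (everts e).card ≤ 2 := by
  induction e using Sym2.ind with
  | _ a b =>
    have h : everts s(a, b) ⊆ {a, b} := by
      intro v hv
      rw [mem_everts, Sym2.mem_iff] at hv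
      simp only [Finset.mem_insert, Finset.mem_singleton]
      exact hv
    exact (Finset.card_le_card h).trans ((Finset.card_insert_le a {b}).trans (by simp))

private lemma sym2_rep (e : Sym2 V) (he : e ∈ G.edgeSet) :
    ∃ a b : V, G.Adj a b ∧ e = s(a, b) := by
  revert he
  refine Sym2.ind (fun a b he => ?_) e
  exact ⟨a, b, (SimpleGraph.mem_edgeSet G).1 he, rfl⟩

/-- A subset of a rainbow matching is a rainbow matching. -/
private lemma rainbow_subset {M M' : Finset (Sym2 V)} (hM : IsRainbowMatching G c M)
    (h : M' ⊆ M) : IsRainbowMatching G c M' := by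
  obtain ⟨hsub, hdis, hinj⟩ := hM
  exact ⟨fun e he => hsub (h he), fun e he f hf hne v hv => hdis e (h he) f (h hf) hne v hv,
    hinj.mono (by exact_mod_cast h)⟩

/-- Inserting a fresh, disjoint edge into a rainbow matching. -/
private lemma rainbow_insert {M : Finset (Sym2 V)} (hM : IsRainbowMatching G c M) {x y : V}
    (hadj : G.Adj x y) (hx : ∀ e ∈ M, x ∉ e) (hy : ∀ e ∈ M, y ∉ e)
    (hc : c s(x, y) ∉ M.image c) :
    IsRainbowMatching G c (insert s(x, y) M) := by
  obtain ⟨hsub, hdis, hinj⟩ := hM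
  have hmem : ∀ z, z ∈ s(x, y) → ∀ g ∈ M, z ∉ g := by
    intro z hz g hg
    rcases Sym2.mem_iff.1 hz with rfl | rfl
    exacts [hx g hg, hy g hg]
  refine ⟨?_, ?_, ?_⟩
  · intro e he
    simp only [Finset.coe_insert, Set.mem_insert_iff] at he
    rcases he with rfl | h
    · exact (SimpleGraph.mem_edgeSet G).2 hadj
    · exact hsub h
  · intro e he f hf hne v hv
    rcases Finset.mem_insert.1 he with rfl | he' <;> rcases Finset.mem_insert.1 hf with rfl | hf'
    · exact absurd rfl hne
    · exact hmem v hv f hf'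
    · intro hvf; exact hmem v hvf e he' hv
    · exact hdis e he' f hf' hne v hv
  · intro e he f hf hcef
    simp only [Finset.coe_insert, Set.mem_insert_iff] at he hf
    rcases he with rfl | he' <;> rcases hf with rfl | hf'
    · rfl
    · exact absurd (Finset.mem_image.2 ⟨f, hf', hcef.symm⟩) hc
    · exact absurd (Finset.mem_image.2 ⟨e, he', hcef⟩) hc
    · exact hinj he' hf' hcef

/-- The key counting bound: if `M` is a maximum rainbow matching in a strongly edge-colored
graph, then the sum of degrees is at most `2 |M| n`. -/
private lemma key_bound (hstrong : StronglyEdgeColored G c) (M : Finset (Sym2 V))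
    (hM : IsRainbowMatching G c M)
    (hmax : ∀ M', IsRainbowMatching G c M' → M'.card ≤ M.card) :
    ∑ v, G.degree v ≤ 2 * M.card * Fintype.card V := by
  classical
  have hM0 := hM
  obtain ⟨hsub, hdis, hinj⟩ := hM
  set m := M.card with hm
  set VM : Finset V := M.biUnion everts with hVM
  have mem_VM : ∀ {v : V}, v ∈ VM ↔ ∃ e ∈ M, v ∈ e := by
    intro v
    simp [hVM, Finset.mem_biUnion, mem_everts]
  have hDnotin : ∀ v : V, v ∉ VM → ∀ e ∈ M, v ∉ e := by
    intro v hv e he hve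
    exact hv (mem_VM.2 ⟨e, he, hve⟩)
  have hVMcard : VM.card ≤ 2 * m := by
    refine Finset.card_biUnion_le.trans ?_
    calc ∑ e ∈ M, (everts e).card ≤ ∑ _e ∈ M, 2 :=
          Finset.sum_le_sum fun e _ => everts_card_le e
      _ = 2 * m := by rw [Finset.sum_const, smul_eq_mul, mul_comm]
  -- properness of the coloring
  have hproper : ∀ (v w w' : V), G.Adj v w → G.Adj v w' → c s(v, w) = c s(v, w') → w = w' := by
    intro v w w' h1 h2 hc
    by_contra hne
    have hne' : s(v, w) ≠ s(v, w') := fun h => hne (Sym2.congr_right.1 h)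
    have := (hstrong _ ((SimpleGraph.mem_edgeSet G).2 h1) _ ((SimpleGraph.mem_edgeSet G).2 h2)
      hne' hc v v (by simp) (by simp)).1
    exact this rfl
  -- fresh neighbors of uncovered vertices are covered
  have hfresh_mem_VM : ∀ v w : V, v ∉ VM → G.Adj v w → c s(v, w) ∉ M.image c → w ∈ VM := by
    intro v w hv hadj hcf
    by_contra hw
    have hrb : IsRainbowMatching G c (insert s(v, w) M) :=
      rainbow_insert hM0 hadj (hDnotin v hv) (hDnotin w hw) hcf
    have hnotmem : s(v, w) ∉ M := fun h => hv (mem_VM.2 ⟨_, h, by simp⟩)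
    have := hmax _ hrb
    rw [Finset.card_insert_of_notMem hnotmem] at this
    omega
  -- the fresh neighborhoods and the "double" edges
  set Fr : V → Finset V :=
    fun v => (G.neighborFinset v).filter (fun w => c s(v, w) ∉ M.image c) with hFrdef
  set P : V → Finset (Sym2 V) :=
    fun v => M.filter (fun e => 2 ≤ (Fr v ∩ everts e).card) with hPdef
  -- degree bound for uncovered vertices
  have hdegD : ∀ v : V, v ∉ VM → G.degree v ≤ m + (P v).card := by
    intro v hv
    set Old : Finset V :=
      (G.neighborFinset v).filter (fun w => c s(v, w) ∈ M.image c) with hOlddef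
    have hsplit : Old.card + (Fr v).card = G.degree v := by
      rw [hOlddef, hFrdef]
      exact Finset.card_filter_add_card_filter_not _
    set Ev : Finset (Sym2 V) := M.filter (fun e => ∃ u ∈ everts e, G.Adj v u) with hEvdef
    set Mfree : Finset (Sym2 V) := M.filter (fun e => ¬ ∃ u ∈ everts e, G.Adj v u) with hMfdef
    have hEvMfree : Ev.card + Mfree.card = m := by
      rw [hEvdef, hMfdef]
      exact Finset.card_filter_add_card_filter_not _
    -- Old maps into colors of edges of M having no neighbor of v
    have hOldMap : ∀ w ∈ Old, c s(v, w) ∈ Mfree.image c := by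
      intro w hw
      obtain ⟨hwn, hwc⟩ := Finset.mem_filter.1 hw
      obtain ⟨e, he, hce⟩ := Finset.mem_image.1 hwc
      have hvw : G.Adj v w := (SimpleGraph.mem_neighborFinset _ _ _).1 hwn
      have hneq : e ≠ s(v, w) := by
        intro h
        exact hDnotin v hv e he (h ▸ (by simp : v ∈ s(v, w)))
      have hfree : ¬ ∃ u ∈ everts e, G.Adj v u := by
        rintro ⟨u, hu, hadj⟩
        have := (hstrong e (hsub he) (s(v, w)) ((SimpleGraph.mem_edgeSet G).2 hvw)
          hneq hce u v (mem_everts.1 hu) (by simp)).2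
        exact this (G.adj_comm u v |>.2 hadj)
      exact Finset.mem_image.2 ⟨e, Finset.mem_filter.2 ⟨he, hfree⟩, hce⟩
    have hOldcard : Old.card ≤ Mfree.card := by
      have hinjOn : Set.InjOn (fun w => c s(v, w)) Old := by
        intro w hw w' hw' hcw
        have h1 : G.Adj v w :=
          (SimpleGraph.mem_neighborFinset _ _ _).1 (Finset.mem_filter.1 (by exact_mod_cast hw)).1
        have h2 : G.Adj v w' :=
          (SimpleGraph.mem_neighborFinset _ _ _).1 (Finset.mem_filter.1 (by exact_mod_cast hw')).1
        exact hproper v w w' h1 h2 hcw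
      calc Old.card = (Old.image (fun w => c s(v, w))).card :=
            (Finset.card_image_of_injOn hinjOn).symm
        _ ≤ (Mfree.image c).card := by
            refine Finset.card_le_card ?_
            intro x hx
            obtain ⟨w, hw, rfl⟩ := Finset.mem_image.1 hx
            exact hOldMap w hw
        _ ≤ Mfree.card := Finset.card_image_le
    -- fresh neighbors live on V(M)
    have hFrVM : Fr v ⊆ VM := by
      intro w hw
      obtain ⟨hwn, hwc⟩ := Finset.mem_filter.1 hw
      exact hfresh_mem_VM v w hv ((SimpleGraph.mem_neighborFinset _ _ _).1 hwn) hwc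
    have hFrsum : (Fr v).card ≤ ∑ e ∈ M, (Fr v ∩ everts e).card := by
      have hsub2 : Fr v ⊆ M.biUnion (fun e => Fr v ∩ everts e) := by
        intro w hw
        obtain ⟨e, he, hwe⟩ := mem_VM.1 (hFrVM hw)
        exact Finset.mem_biUnion.2 ⟨e, he, Finset.mem_inter.2 ⟨hw, mem_everts.2 hwe⟩⟩
      exact (Finset.card_le_card hsub2).trans Finset.card_biUnion_le
    have hterm : ∀ e ∈ M, (Fr v ∩ everts e).card ≤
        (if e ∈ Ev then 1 else 0) + (if e ∈ P v then 1 else 0) := by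
      intro e he
      by_cases h2 : 2 ≤ (Fr v ∩ everts e).card
      · have he2 : e ∈ P v := by
          rw [hPdef]; exact Finset.mem_filter.2 ⟨he, h2⟩
        have he1 : e ∈ Ev := by
          obtain ⟨w, hw⟩ := Finset.card_pos.1 (by omega : 0 < (Fr v ∩ everts e).card)
          obtain ⟨hw1, hw2⟩ := Finset.mem_inter.1 hw
          have hadj : G.Adj v w :=
            (SimpleGraph.mem_neighborFinset _ _ _).1 (Finset.mem_filter.1 hw1).1
          rw [hEvdef]; exact Finset.mem_filter.2 ⟨he, ⟨w, hw2, hadj⟩⟩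
        have hle2 : (Fr v ∩ everts e).card ≤ 2 :=
          (Finset.card_le_card (Finset.inter_subset_right)).trans (everts_card_le e)
        simp only [he1, he2, if_pos]
        omega
      · by_cases h1 : 1 ≤ (Fr v ∩ everts e).card
        · have he1 : e ∈ Ev := by
            obtain ⟨w, hw⟩ := Finset.card_pos.1 h1
            obtain ⟨hw1, hw2⟩ := Finset.mem_inter.1 hw
            have hadj : G.Adj v w :=
              (SimpleGraph.mem_neighborFinset _ _ _).1 (Finset.mem_filter.1 hw1).1
            rw [hEvdef]; exact Finset.mem_filter.2 ⟨he, ⟨w, hw2, hadj⟩⟩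
          simp only [he1, if_pos]
          omega
        · omega
    have hFrcard : (Fr v).card ≤ Ev.card + (P v).card := by
      have h1 : ∑ e ∈ M, (Fr v ∩ everts e).card ≤
          ∑ e ∈ M, ((if e ∈ Ev then 1 else 0) + (if e ∈ P v then 1 else 0)) :=
        Finset.sum_le_sum hterm
      have h2 : ∑ e ∈ M, ((if e ∈ Ev then (1:ℕ) else 0) + (if e ∈ P v then 1 else 0)) =
          Ev.card + (P v).card := by
        rw [Finset.sum_add_distrib, Finset.sum_ite_mem, Finset.sum_ite_mem,
          Finset.inter_eq_right.2 (Finset.filter_subset _ _),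
          Finset.inter_eq_right.2 (Finset.filter_subset _ _)]
        simp
        rfl
      omega
    omega
  -- per M-edge, at most one uncovered vertex has both endpoints fresh
  have huniq : ∀ e ∈ M, ∀ v v' : V, v ∉ VM → v' ∉ VM → e ∈ P v → e ∈ P v' → v = v' := by
    intro e he v v' hv hv' hPv hPv'
    by_contra hne
    obtain ⟨a, b, hadj, rfl⟩ := sym2_rep e (hsub he)
    have hsubFr : ∀ u : V, u ∉ VM → s(a, b) ∈ P u → everts s(a, b) ⊆ Fr u := by
      intro u _ hPu
      have h2 := (Finset.mem_filter.1 hPu).2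
      have heq : Fr u ∩ everts s(a, b) = everts s(a, b) :=
        Finset.eq_of_subset_of_card_le (Finset.inter_subset_right)
          ((everts_card_le _).trans h2)
      rw [← heq]
      exact Finset.inter_subset_left
    have haFr : a ∈ Fr v := hsubFr v hv hPv (mem_everts.2 (by simp))
    have hbFr' : b ∈ Fr v' := hsubFr v' hv' hPv' (mem_everts.2 (by simp))
    have hva : G.Adj v a := (SimpleGraph.mem_neighborFinset _ _ _).1 (Finset.mem_filter.1 haFr).1
    have hcva : c s(v, a) ∉ M.image c := (Finset.mem_filter.1 haFr).2
    have hv'b : G.Adj v' b := (SimpleGraph.mem_neighborFinset _ _ _).1 (Finset.mem_filter.1 hbFr').1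
    have hcv'b : c s(v', b) ∉ M.image c := (Finset.mem_filter.1 hbFr').2
    have haVM : a ∈ VM := mem_VM.2 ⟨s(a, b), he, by simp⟩
    have hbVM : b ∈ VM := mem_VM.2 ⟨s(a, b), he, by simp⟩
    have hva' : v ≠ a := fun h => hv (h ▸ haVM)
    have hvb : v ≠ b := fun h => hv (h ▸ hbVM)
    have hv'a : v' ≠ a := fun h => hv' (h ▸ haVM)
    have hv'b' : v' ≠ b := fun h => hv' (h ▸ hbVM)
    have hab : a ≠ b := G.ne_of_adj hadj
    have hedne : s(v, a) ≠ s(v', b) := by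
      intro h
      rcases Sym2.eq_iff.1 h with ⟨h1, _⟩ | ⟨h1, _⟩
      exacts [hne h1, hvb h1]
    have hcol : c s(v, a) ≠ c s(v', b) := by
      intro hceq
      have := (hstrong _ ((SimpleGraph.mem_edgeSet G).2 hva) _
        ((SimpleGraph.mem_edgeSet G).2 hv'b) hedne hceq a b (by simp) (by simp)).2
      exact this hadj
    -- build a larger rainbow matching
    have herase : IsRainbowMatching G c (M.erase s(a, b)) :=
      rainbow_subset hM0 (Finset.erase_subset _ _)
    have hnotinerase : ∀ f ∈ M.erase s(a, b), ∀ z : V, z ∈ s(a, b) → z ∉ f := by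
      intro f hf z hz
      obtain ⟨hfne, hfM⟩ := Finset.mem_erase.1 hf
      exact hdis s(a, b) he f hfM (Ne.symm hfne) z hz
    have hstep1 : IsRainbowMatching G c (insert s(v', b) (M.erase s(a, b))) := by
      refine rainbow_insert herase hv'b ?_ ?_ ?_
      · intro f hf
        exact hDnotin v' hv' f (Finset.mem_of_mem_erase hf)
      · intro f hf
        exact hnotinerase f hf b (by simp)
      · intro h
        obtain ⟨f, hf, hcf⟩ := Finset.mem_image.1 h
        exact hcv'b (Finset.mem_image.2 ⟨f, Finset.mem_of_mem_erase hf, hcf⟩)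
    have hstep2 : IsRainbowMatching G c
        (insert s(v, a) (insert s(v', b) (M.erase s(a, b)))) := by
      refine rainbow_insert hstep1 hva ?_ ?_ ?_
      · intro f hf
        rcases Finset.mem_insert.1 hf with rfl | hf'
        · rw [Sym2.mem_iff]
          rintro (h | h)
          exacts [hne h, hvb h]
        · exact hDnotin v hv f (Finset.mem_of_mem_erase hf')
      · intro f hf
        rcases Finset.mem_insert.1 hf with rfl | hf'
        · rw [Sym2.mem_iff]
          rintro (h | h)
          exacts [hv'a h.symm, hab h]
        · exact hnotinerase f hf' a (by simp)
      · intro h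
        obtain ⟨f, hf, hcf⟩ := Finset.mem_image.1 h
        rcases Finset.mem_insert.1 hf with rfl | hf'
        · exact hcol hcf.symm
        · exact hcva (Finset.mem_image.2 ⟨f, Finset.mem_of_mem_erase hf', hcf⟩)
    -- cardinality
    have hbnot : s(v', b) ∉ M.erase s(a, b) := by
      intro h
      exact hDnotin v' hv' _ (Finset.mem_of_mem_erase h) (by simp)
    have hanot : s(v, a) ∉ insert s(v', b) (M.erase s(a, b)) := by
      intro h
      rcases Finset.mem_insert.1 h with h' | h'
      · exact hedne h'
      · exact hDnotin v hv _ (Finset.mem_of_mem_erase h') (by simp)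
    have hcard : (insert s(v, a) (insert s(v', b) (M.erase s(a, b)))).card = m + 1 := by
      rw [Finset.card_insert_of_notMem hanot, Finset.card_insert_of_notMem hbnot,
        Finset.card_erase_of_mem he]
      have : 1 ≤ m := Finset.card_pos.2 ⟨_, he⟩
      omega
    have := hmax _ hstep2
    omega
  -- summed bound on the double pairs
  have hsumP : ∑ v ∈ VMᶜ, (P v).card ≤ m := by
    have h1 : ∀ v : V, (P v).card = ∑ e ∈ M, if 2 ≤ (Fr v ∩ everts e).card then 1 else 0 := by
      intro v
      rw [hPdef]
      exact Finset.card_filter _ _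
    calc ∑ v ∈ VMᶜ, (P v).card
        = ∑ v ∈ VMᶜ, ∑ e ∈ M, (if 2 ≤ (Fr v ∩ everts e).card then 1 else 0) := by
          exact Finset.sum_congr rfl fun v _ => h1 v
      _ = ∑ e ∈ M, ∑ v ∈ VMᶜ, (if 2 ≤ (Fr v ∩ everts e).card then 1 else 0) :=
          Finset.sum_comm
      _ ≤ ∑ _e ∈ M, 1 := by
          refine Finset.sum_le_sum fun e he => ?_
          rw [← Finset.card_filter]
          refine Finset.card_le_one.2 fun v hv v' hv' => ?_
          obtain ⟨hv1, hv2⟩ := Finset.mem_filter.1 hv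
          obtain ⟨hv1', hv2'⟩ := Finset.mem_filter.1 hv'
          refine huniq e he v v' (Finset.mem_compl.1 hv1) (Finset.mem_compl.1 hv1')
            ?_ ?_
          · rw [hPdef]; exact Finset.mem_filter.2 ⟨he, hv2⟩
          · rw [hPdef]; exact Finset.mem_filter.2 ⟨he, hv2'⟩
      _ = m := by simp [hm]
  -- total over uncovered vertices
  have hsumD : ∑ v ∈ VMᶜ, G.degree v ≤ m * VMᶜ.card + m := by
    calc ∑ v ∈ VMᶜ, G.degree v ≤ ∑ v ∈ VMᶜ, (m + (P v).card) :=
          Finset.sum_le_sum fun v hv => hdegD v (Finset.mem_compl.1 hv)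
      _ = m * VMᶜ.card + ∑ v ∈ VMᶜ, (P v).card := by
          rw [Finset.sum_add_distrib, Finset.sum_const, smul_eq_mul, mul_comm]
      _ ≤ m * VMᶜ.card + m := by omega
  -- covered side
  have hdegVM : ∀ w ∈ VM, G.degree w ≤ (VM.erase w).card + (G.neighborFinset w ∩ VMᶜ).card := by
    intro w hw
    have hsplit : ((G.neighborFinset w).filter (· ∈ VM)).card +
        ((G.neighborFinset w).filter (fun x => ¬ x ∈ VM)).card = G.degree w :=
      Finset.card_filter_add_card_filter_not _
    have h1 : (G.neighborFinset w).filter (· ∈ VM) ⊆ VM.erase w := by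
      intro x hx
      obtain ⟨hx1, hx2⟩ := Finset.mem_filter.1 hx
      have hadj : G.Adj w x := (SimpleGraph.mem_neighborFinset _ _ _).1 hx1
      exact Finset.mem_erase.2 ⟨(G.ne_of_adj hadj).symm, hx2⟩
    have h2 : (G.neighborFinset w).filter (fun x => ¬ x ∈ VM) =
        G.neighborFinset w ∩ VMᶜ := by
      ext x
      simp [Finset.mem_filter, Finset.mem_inter, Finset.mem_compl]
    rw [h2] at hsplit
    have := Finset.card_le_card h1
    omega
  have hswap : ∑ w ∈ VM, (G.neighborFinset w ∩ VMᶜ).card =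
      ∑ v ∈ VMᶜ, (G.neighborFinset v ∩ VM).card := by
    have ha : ∀ w : V, ∀ s : Finset V, G.neighborFinset w ∩ s = s.filter (fun x => G.Adj w x) := by
      intro w s
      ext x
      simp [Finset.mem_inter, Finset.mem_filter, SimpleGraph.mem_neighborFinset, and_comm]
    calc ∑ w ∈ VM, (G.neighborFinset w ∩ VMᶜ).card
        = ∑ w ∈ VM, ∑ v ∈ VMᶜ, (if G.Adj w v then 1 else 0) := by
          refine Finset.sum_congr rfl fun w _ => ?_
          rw [ha w VMᶜ]
          exact Finset.card_filter _ _
      _ = ∑ v ∈ VMᶜ, ∑ w ∈ VM, (if G.Adj w v then 1 else 0) := Finset.sum_comm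
      _ = ∑ v ∈ VMᶜ, (G.neighborFinset v ∩ VM).card := by
          refine Finset.sum_congr rfl fun v _ => ?_
          rw [ha v VM]
          rw [Finset.card_filter]
          refine Finset.sum_congr rfl fun w _ => ?_
          simp [G.adj_comm]
  have hsumVM : ∑ w ∈ VM, G.degree w ≤
      VM.card * (VM.card - 1) + (m * VMᶜ.card + m) := by
    calc ∑ w ∈ VM, G.degree w
        ≤ ∑ w ∈ VM, ((VM.erase w).card + (G.neighborFinset w ∩ VMᶜ).card) :=
          Finset.sum_le_sum hdegVM
      _ = ∑ w ∈ VM, (VM.card - 1) + ∑ w ∈ VM, (G.neighborFinset w ∩ VMᶜ).card := by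
          rw [← Finset.sum_add_distrib]
          refine Finset.sum_congr rfl fun w hw => ?_
          rw [Finset.card_erase_of_mem hw]
      _ = VM.card * (VM.card - 1) + ∑ v ∈ VMᶜ, (G.neighborFinset v ∩ VM).card := by
          rw [Finset.sum_const, smul_eq_mul, hswap]
      _ ≤ VM.card * (VM.card - 1) + ∑ v ∈ VMᶜ, G.degree v := by
          refine Nat.add_le_add_left (Finset.sum_le_sum fun v _ => ?_) _
          exact Finset.card_le_card (Finset.inter_subset_left)
      _ ≤ VM.card * (VM.card - 1) + (m * VMᶜ.card + m) := Nat.add_le_add_left hsumD _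
  -- put everything together
  have htotal : ∑ v, G.degree v = ∑ w ∈ VM, G.degree w + ∑ v ∈ VMᶜ, G.degree v :=
    (Finset.sum_add_sum_compl VM _).symm
  have hcards : VM.card + VMᶜ.card = Fintype.card V := Finset.card_add_card_compl VM
  rcases M.eq_empty_or_nonempty with hMe | hMne
  · have hVMe : VM = ∅ := by rw [hVM, hMe]; simp
    have hm0 : m = 0 := by rw [hm, hMe]; simp
    rw [htotal, hVMe, hm0]
    simp only [Finset.sum_empty, zero_add, Finset.compl_empty, Nat.mul_zero, Nat.zero_mul,
      mul_zero, zero_mul]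
    have h := hsumD
    rw [hVMe, hm0] at h
    simp only [Finset.compl_empty, Nat.zero_mul, zero_mul, zero_add] at h
    exact h
  · obtain ⟨e, he⟩ := hMne
    obtain ⟨a, b, hadj, rfl⟩ := sym2_rep e (hsub he)
    have haVM : a ∈ VM := mem_VM.2 ⟨s(a, b), he, by simp⟩
    have hVMpos : 1 ≤ VM.card := Finset.card_pos.2 ⟨a, haVM⟩
    obtain ⟨B, hB⟩ : ∃ B, VM.card = B + 1 := ⟨VM.card - 1, by omega⟩
    have hBle : B + 1 ≤ 2 * m := hB ▸ hVMcard
    calc ∑ v, G.degree v = ∑ w ∈ VM, G.degree w + ∑ v ∈ VMᶜ, G.degree v := htotal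
      _ ≤ (VM.card * (VM.card - 1) + (m * VMᶜ.card + m)) + (m * VMᶜ.card + m) :=
          Nat.add_le_add hsumVM hsumD
      _ = (B + 1) * ((B + 1) - 1) + (m * VMᶜ.card + m) + (m * VMᶜ.card + m) := by rw [hB]
      _ = (B + 1) * B + 2 * m * VMᶜ.card + 2 * m := by simp only [Nat.add_sub_cancel]; ring
      _ ≤ 2 * m * B + 2 * m * VMᶜ.card + 2 * m := by
          have : (B + 1) * B ≤ 2 * m * B := Nat.mul_le_mul_right B hBle
          omega
      _ = 2 * m * (B + 1 + VMᶜ.card) := by ring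
      _ = 2 * m * Fintype.card V := by rw [← hB, hcards]

end Aux

/-- Theorem 5 (Zhou): every strongly edge-colored graph with average degree at least
`2k - 1` contains a rainbow matching of size at least `k`. -/
theorem rainbow_matching_strongly_edge_colored_avg_degree
    {V : Type*} [Fintype V] (k : ℕ) (hk : 1 ≤ k)
    (G : SimpleGraph V) [DecidableRel G.Adj] (c : Sym2 V → ℕ)
    (hstrong : StronglyEdgeColored G c)
    (havg : (2 * (k : ℚ) - 1) ≤ (∑ v, (G.degree v : ℚ)) / (Fintype.card V : ℚ)) :
    ∃ M : Finset (Sym2 V), IsRainbowMatching G c M ∧ k ≤ M.card := by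
  classical
  by_contra hcon
  push_neg at hcon
  -- choose a maximum rainbow matching
  set S : Finset (Finset (Sym2 V)) :=
    Finset.univ.filter (fun M => IsRainbowMatching G c M) with hS
  have hSne : S.Nonempty := by
    refine ⟨∅, Finset.mem_filter.2 ⟨Finset.mem_univ _, ?_, ?_, ?_⟩⟩
    · simp
    · simp
    · simp
  obtain ⟨M, hMS, hMmax⟩ := S.exists_max_image Finset.card hSne
  have hMr : IsRainbowMatching G c M := (Finset.mem_filter.1 hMS).2
  have hmax : ∀ M', IsRainbowMatching G c M' → M'.card ≤ M.card := fun M' hM' =>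
    hMmax M' (Finset.mem_filter.2 ⟨Finset.mem_univ _, hM'⟩)
  have hkey : ∑ v, G.degree v ≤ 2 * M.card * Fintype.card V :=
    key_bound hstrong M hMr hmax
  have hMlt : M.card < k := hcon M hMr
  -- now derive a contradiction from the average degree hypothesis
  set n := Fintype.card V with hn
  rcases Nat.eq_zero_or_pos n with h0 | hpos
  · have hVempty : (Finset.univ : Finset V) = ∅ := by
      rw [← Finset.card_eq_zero, Finset.card_univ, ← hn, h0]
    rw [h0, hVempty] at havg
    simp at havg
    have : (1 : ℚ) ≤ (k : ℚ) := by exact_mod_cast hk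
    linarith
  · have hnQ : (0 : ℚ) < (n : ℚ) := by exact_mod_cast hpos
    have hsum : (∑ v, (G.degree v : ℚ)) = ((∑ v, G.degree v : ℕ) : ℚ) := by
      push_cast
      rfl
    rw [hsum] at havg
    have h1 : (2 * (k : ℚ) - 1) * (n : ℚ) ≤ ((∑ v, G.degree v : ℕ) : ℚ) :=
      (le_div_iff₀ hnQ).1 havg
    have h2 : ((∑ v, G.degree v : ℕ) : ℚ) ≤ 2 * (M.card : ℚ) * (n : ℚ) := by
      exact_mod_cast hkey
    have h3 : (M.card : ℚ) ≤ (k : ℚ) - 1 := by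
      have : M.card + 1 ≤ k := hMlt
      have := (Nat.cast_le (α := ℚ)).2 this
      push_cast at this
      linarith
    nlinarith [hnQ, h1, h2, h3]
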